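/- With contact forces Fᵢᶜᵒⁿᵗ = (Mᵢ/Δt)·((vᶜᵐ - vᵢᵗʳˡ)·n)·n where n is a common unit vector (with n₁ = n = -n₂ used for the respective fields, i.e. Fᵢᶜᵒⁿᵗ = (Mᵢ/Δt)((vᶜᵐ - vᵢᵗʳˡ)·nᵢ)nᵢ with n₁ = -n₂), the corrected velocities vᵢ = vᵢᵗʳˡ + Δt·Fᵢᶜᵒⁿᵗ/Mᵢ satisfy the impenetrability condition (v₁ - v₂)·n₁ = 0. -/
import Mathlib

open scoped RealInnerProductSpace

theorem impenetrability_after_normal_correction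
    {d : ℕ} (M₁ M₂ Δt : ℝ) (hM₁ : 0 < M₁) (hM₂ : 0 < M₂) (hΔt : 0 < Δt)
    (v₁t v₂t vcm n₁ n₂ v₁ v₂ : EuclideanSpace ℝ (Fin d))
    (hvcm : vcm = (M₁ + M₂)⁻¹ • (M₁ • v₁t + M₂ • v₂t))
    (hn : ‖n₁‖ = 1) (hn₂ : n₂ = -n₁)
    (hv₁ : v₁ = v₁t + ⟪vcm - v₁t, n₁⟫ • n₁)
    (hv₂ : v₂ = v₂t + ⟪vcm - v₂t, n₂⟫ • n₂) :
    ⟪v₁ - v₂, n₁⟫ = 0 := by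
  have h : ⟪n₁, n₁⟫ = 1 := by
    rw [real_inner_self_eq_norm_sq, hn]; norm_num
  subst hv₁ hv₂ hn₂
  simp only [inner_sub_left, inner_sub_right, inner_add_left, inner_add_right,
    inner_smul_left, inner_smul_right, inner_neg_left, inner_neg_right,
    inner_neg_neg, real_inner_comm n₁, h]
  ring
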